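/- Fix a real number s > 9/2. For each odd integer N ≥ 3 define Q_N(s) := (1/N⁴) · Σ_{n ∈ Λ_N*} |n|^{1-2s} · Σ_{k ∈ Λ_N*, k ≠ n} |n×k|⁶ · (|n-k| + |k|) / ( |k|⁴ · |n-k|² ). Then Q_N(s) → 0 as N → ∞ (along odd N). -/

import Mathlib

set_option maxHeartbeats 1000000


open Filter

/-- The Euclidean norm of a lattice point `n ∈ ℤ² ⊂ ℝ²`. -/
noncomputable def enorm2 (n : ℤ × ℤ) : ℝ :=
  Real.sqrt ((n.1 : ℝ) ^ 2 + (n.2 : ℝ) ^ 2)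

/-- The nonzero modes `Λ_N* = {n ∈ ℤ² \ {0} : |n₁| ≤ (N-1)/2, |n₂| ≤ (N-1)/2}`. -/
noncomputable def Lam (N : ℕ) : Finset (ℤ × ℤ) :=
  ((Finset.Icc (-(((N : ℤ) - 1) / 2)) (((N : ℤ) - 1) / 2)) ×ˢ
    (Finset.Icc (-(((N : ℤ) - 1) / 2)) (((N : ℤ) - 1) / 2))).erase (0, 0)

/-- The cross product `n×k := n₂k₁ - n₁k₂` of lattice points. -/
def cross (n k : ℤ × ℤ) : ℤ := n.2 * k.1 - n.1 * k.2

/-- The torus consistency quantity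
`Q_N(s) = (1/N⁴) Σ_{n ∈ Λ_N*} |n|^{1-2s} Σ_{k ∈ Λ_N*, k ≠ n}
  |n×k|⁶ (|n-k| + |k|) / (|k|⁴ |n-k|²)`. -/
noncomputable def Q (s : ℝ) (N : ℕ) : ℝ :=
  (1 / (N : ℝ) ^ 4) *
    ∑ n ∈ Lam N, enorm2 n ^ (1 - 2 * s) *
      ∑ k ∈ (Lam N).erase n,
        |((cross n k : ℤ) : ℝ)| ^ 6 * (enorm2 (n - k) + enorm2 k) /
          (enorm2 k ^ 4 * enorm2 (n - k) ^ 2)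

/-! ### Auxiliary lemmas -/

lemma enorm2_nonneg (n : ℤ × ℤ) : 0 ≤ enorm2 n := Real.sqrt_nonneg _

lemma one_le_enorm2 {n : ℤ × ℤ} (hn : n ≠ 0) : 1 ≤ enorm2 n := by
  have hij : n.1 ≠ 0 ∨ n.2 ≠ 0 := by
    by_contra h
    push_neg at h
    exact hn (Prod.ext h.1 h.2)
  have h1 : (1 : ℤ) ≤ n.1 ^ 2 + n.2 ^ 2 := by
    rcases hij with h | h
    · nlinarith [Int.one_le_abs h, sq_abs n.1, sq_nonneg n.2, abs_nonneg n.1]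
    · nlinarith [Int.one_le_abs h, sq_abs n.2, sq_nonneg n.1, abs_nonneg n.2]
  have h1' : (1 : ℝ) ≤ (n.1 : ℝ) ^ 2 + (n.2 : ℝ) ^ 2 := by exact_mod_cast h1
  calc (1 : ℝ) = Real.sqrt 1 := Real.sqrt_one.symm
  _ ≤ enorm2 n := Real.sqrt_le_sqrt h1'

lemma enorm2_pos {n : ℤ × ℤ} (hn : n ≠ 0) : 0 < enorm2 n :=
  lt_of_lt_of_le one_pos (one_le_enorm2 hn)

lemma abs_cross_le (n k : ℤ × ℤ) : |((cross n k : ℤ) : ℝ)| ≤ enorm2 n * enorm2 k := by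
  have h2 : ((cross n k : ℤ) : ℝ) ^ 2 ≤
      ((n.1 : ℝ) ^ 2 + (n.2 : ℝ) ^ 2) * ((k.1 : ℝ) ^ 2 + (k.2 : ℝ) ^ 2) := by
    simp only [cross]
    push_cast
    nlinarith [sq_nonneg ((n.1 : ℝ) * (k.1 : ℝ) + (n.2 : ℝ) * (k.2 : ℝ))]
  calc |((cross n k : ℤ) : ℝ)| = Real.sqrt (((cross n k : ℤ) : ℝ) ^ 2) :=
        (Real.sqrt_sq_eq_abs _).symm
  _ ≤ Real.sqrt (((n.1 : ℝ) ^ 2 + (n.2 : ℝ) ^ 2) * ((k.1 : ℝ) ^ 2 + (k.2 : ℝ) ^ 2)) :=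
        Real.sqrt_le_sqrt h2
  _ = enorm2 n * enorm2 k := by
        rw [enorm2, enorm2, ← Real.sqrt_mul (by positivity)]

lemma mem_Lam_bounds {m : ℕ} {n : ℤ × ℤ} (h : n ∈ Lam (2 * m + 3)) :
    n ≠ 0 ∧ |n.1| ≤ (m : ℤ) + 1 ∧ |n.2| ≤ (m : ℤ) + 1 := by
  simp only [Lam, Finset.mem_erase, Finset.mem_product, Finset.mem_Icc] at h
  obtain ⟨hne, ⟨h1a, h1b⟩, h2a, h2b⟩ := h
  refine ⟨?_, ?_, ?_⟩
  · intro h0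
    exact hne (by rw [h0]; rfl)
  · rw [abs_le]; constructor <;> omega
  · rw [abs_le]; constructor <;> omega

lemma enorm2_le_N {m : ℕ} {n : ℤ × ℤ} (h : n ∈ Lam (2 * m + 3)) :
    enorm2 n ≤ ((2 * m + 3 : ℕ) : ℝ) := by
  obtain ⟨-, h1, h2⟩ := mem_Lam_bounds h
  have h1' : |(n.1 : ℝ)| ≤ (m : ℝ) + 1 := by rw [← Int.cast_abs]; exact_mod_cast h1
  have h2' : |(n.2 : ℝ)| ≤ (m : ℝ) + 1 := by rw [← Int.cast_abs]; exact_mod_cast h2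
  have hsum : (n.1 : ℝ) ^ 2 + (n.2 : ℝ) ^ 2 ≤ ((2 * m + 3 : ℕ) : ℝ) ^ 2 := by
    push_cast
    nlinarith [sq_abs (n.1 : ℝ), sq_abs (n.2 : ℝ), abs_nonneg (n.1 : ℝ), abs_nonneg (n.2 : ℝ)]
  calc enorm2 n ≤ Real.sqrt (((2 * m + 3 : ℕ) : ℝ) ^ 2) := Real.sqrt_le_sqrt hsum
  _ = ((2 * m + 3 : ℕ) : ℝ) := Real.sqrt_sq (by positivity)

lemma enorm2_sub_le {m : ℕ} {n k : ℤ × ℤ} (hn : n ∈ Lam (2 * m + 3))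
    (hk : k ∈ Lam (2 * m + 3)) : enorm2 (n - k) ≤ 2 * ((2 * m + 3 : ℕ) : ℝ) := by
  obtain ⟨-, hn1, hn2⟩ := mem_Lam_bounds hn
  obtain ⟨-, hk1, hk2⟩ := mem_Lam_bounds hk
  have e1 : ((n - k).1 : ℝ) = (n.1 : ℝ) - (k.1 : ℝ) := by push_cast [Prod.fst_sub]; ring
  have e2 : ((n - k).2 : ℝ) = (n.2 : ℝ) - (k.2 : ℝ) := by push_cast [Prod.snd_sub]; ring
  have h1 : |(n.1 : ℝ) - (k.1 : ℝ)| ≤ 2 * ((m : ℝ) + 1) := by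
    have := abs_sub (n.1 : ℝ) (k.1 : ℝ)
    have a1 : |(n.1 : ℝ)| ≤ (m : ℝ) + 1 := by
      rw [← Int.cast_abs]; exact_mod_cast hn1
    have a2 : |(k.1 : ℝ)| ≤ (m : ℝ) + 1 := by
      rw [← Int.cast_abs]; exact_mod_cast hk1
    calc |(n.1 : ℝ) - (k.1 : ℝ)| ≤ |(n.1 : ℝ)| + |(k.1 : ℝ)| := abs_sub _ _
    _ ≤ 2 * ((m : ℝ) + 1) := by linarith
  have h2 : |(n.2 : ℝ) - (k.2 : ℝ)| ≤ 2 * ((m : ℝ) + 1) := by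
    have a1 : |(n.2 : ℝ)| ≤ (m : ℝ) + 1 := by
      rw [← Int.cast_abs]; exact_mod_cast hn2
    have a2 : |(k.2 : ℝ)| ≤ (m : ℝ) + 1 := by
      rw [← Int.cast_abs]; exact_mod_cast hk2
    calc |(n.2 : ℝ) - (k.2 : ℝ)| ≤ |(n.2 : ℝ)| + |(k.2 : ℝ)| := abs_sub _ _
    _ ≤ 2 * ((m : ℝ) + 1) := by linarith
  have hsum : ((n - k).1 : ℝ) ^ 2 + ((n - k).2 : ℝ) ^ 2 ≤ (2 * ((2 * m + 3 : ℕ) : ℝ)) ^ 2 := by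
    rw [e1, e2]
    push_cast
    nlinarith [sq_abs ((n.1 : ℝ) - (k.1 : ℝ)), sq_abs ((n.2 : ℝ) - (k.2 : ℝ)),
      abs_nonneg ((n.1 : ℝ) - (k.1 : ℝ)), abs_nonneg ((n.2 : ℝ) - (k.2 : ℝ))]
  calc enorm2 (n - k) ≤ Real.sqrt ((2 * ((2 * m + 3 : ℕ) : ℝ)) ^ 2) := Real.sqrt_le_sqrt hsum
  _ = 2 * ((2 * m + 3 : ℕ) : ℝ) := Real.sqrt_sq (by positivity)

/-- The tail constant: `T α = Σ_{x ∈ ℤ²} ‖x‖^(-α)` (sup norm), finite for `α > 2`. -/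
noncomputable def Tc (α : ℝ) : ℝ := ∑' x : Fin 2 → ℤ, ‖x‖ ^ (-α)

lemma Tc_nonneg (α : ℝ) : 0 ≤ Tc α :=
  tsum_nonneg fun x => Real.rpow_nonneg (norm_nonneg _) _

/-- Any finite lattice sum `Σ |p|^(-α)` is bounded by `Tc α` when `α > 2`. -/
lemma sum_enorm2_rpow_le {α : ℝ} (hα : 2 < α) (F : Finset (ℤ × ℤ)) :
    ∑ p ∈ F, enorm2 p ^ (-α) ≤ Tc α := by
  have hsum := EisensteinSeries.summable_one_div_norm_rpow hα
  set e : ℤ × ℤ → (Fin 2 → ℤ) := fun p => ![p.1, p.2] with he_def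
  have he : Function.Injective e := by
    intro p q h
    have h0 := congrFun h 0
    have h1 := congrFun h 1
    simp only [e, Matrix.cons_val_zero, Matrix.cons_val_one, Matrix.head_cons] at h0 h1
    exact Prod.ext h0 h1
  have step1 : ∀ p : ℤ × ℤ, enorm2 p ^ (-α) ≤ ‖e p‖ ^ (-α) := by
    intro p
    by_cases hp : p = 0
    · subst hp
      have h1 : enorm2 (0 : ℤ × ℤ) = 0 := by simp [enorm2]
      have h2 : ‖e (0 : ℤ × ℤ)‖ = 0 := by
        rw [EisensteinSeries.norm_eq_max_natAbs]
        simp [e]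
      rw [h1, h2]
    · have hne : e p ≠ 0 := by
        intro h
        apply hp
        have h0 := congrFun h 0
        have h1 := congrFun h 1
        simp only [e, Matrix.cons_val_zero, Matrix.cons_val_one, Matrix.head_cons,
          Pi.zero_apply] at h0 h1
        exact Prod.ext h0 h1
      have hpos : 0 < ‖e p‖ := norm_pos_iff.mpr hne
      have hle : ‖e p‖ ≤ enorm2 p := by
        rw [EisensteinSeries.norm_eq_max_natAbs]
        simp only [e, Matrix.cons_val_zero, Matrix.cons_val_one, Matrix.head_cons]
        have c1 : ((p.1.natAbs : ℕ) : ℝ) ≤ enorm2 p := by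
          rw [show ((p.1.natAbs : ℕ) : ℝ) = |(p.1 : ℝ)| by
            rw [Nat.cast_natAbs]; push_cast; ring]
          exact Real.le_sqrt_of_sq_le (by rw [sq_abs]; nlinarith [sq_nonneg ((p.2 : ℝ))])
        have c2 : ((p.2.natAbs : ℕ) : ℝ) ≤ enorm2 p := by
          rw [show ((p.2.natAbs : ℕ) : ℝ) = |(p.2 : ℝ)| by
            rw [Nat.cast_natAbs]; push_cast; ring]
          exact Real.le_sqrt_of_sq_le (by rw [sq_abs]; nlinarith [sq_nonneg ((p.1 : ℝ))])
        rw [Nat.cast_max]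
        exact max_le c1 c2
      exact Real.rpow_le_rpow_of_nonpos hpos hle (by linarith)
  calc ∑ p ∈ F, enorm2 p ^ (-α) ≤ ∑ p ∈ F, ‖e p‖ ^ (-α) :=
        Finset.sum_le_sum fun p _ => step1 p
  _ = ∑ x ∈ F.image e, ‖x‖ ^ (-α) :=
        (Finset.sum_image (f := fun x => ‖x‖ ^ (-α)) fun a _ b _ h => he h).symm
  _ ≤ Tc α := Summable.sum_le_tsum _ (fun x _ => Real.rpow_nonneg (norm_nonneg _) _) hsum

/-- The main quantitative bound: `Q_N(s) ≤ K / √N` along odd `N = 2m+3`. -/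
lemma Q_le (s : ℝ) (hs : 9 / 2 < s) (m : ℕ) :
    Q s (2 * m + 3) ≤
      3 * Real.sqrt 2 * Tc (5 / 2) * Tc (2 * s - 7) / Real.sqrt ((2 * m + 3 : ℕ) : ℝ) := by
  set N : ℕ := 2 * m + 3 with hNdef
  have hN0 : (0 : ℝ) < (N : ℝ) := by positivity
  have hT1 : 0 ≤ Tc (5 / 2) := Tc_nonneg _
  have hT2 : 0 ≤ Tc (2 * s - 7) := Tc_nonneg _
  have hsN : 0 < Real.sqrt (N : ℝ) := Real.sqrt_pos.mpr hN0
  have hs2N : (0 : ℝ) ≤ Real.sqrt (2 * (N : ℝ)) := Real.sqrt_nonneg _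
  -- Step A + B: bound the inner sum for each `n`.
  have hinner : ∀ n ∈ Lam N, (∑ k ∈ (Lam N).erase n,
      |((cross n k : ℤ) : ℝ)| ^ 6 * (enorm2 (n - k) + enorm2 k) /
        (enorm2 k ^ 4 * enorm2 (n - k) ^ 2)) ≤
      (3 * (N : ℝ) ^ 3 * Real.sqrt (2 * (N : ℝ)) * Tc (5 / 2)) * enorm2 n ^ (6 : ℕ) := by
    intro n hn
    obtain ⟨hn0, -, -⟩ := mem_Lam_bounds (m := m) hn
    have ha0 : 0 ≤ enorm2 n := enorm2_nonneg n
    have ha1 : 1 ≤ enorm2 n := one_le_enorm2 hn0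
    have stepA : ∀ k ∈ (Lam N).erase n,
        |((cross n k : ℤ) : ℝ)| ^ 6 * (enorm2 (n - k) + enorm2 k) /
          (enorm2 k ^ 4 * enorm2 (n - k) ^ 2) ≤
        (3 * (N : ℝ) ^ 3 * Real.sqrt (2 * (N : ℝ))) * enorm2 n ^ (6 : ℕ) *
          enorm2 (n - k) ^ (-(5 / 2) : ℝ) := by
      intro k hk
      have hkn : k ≠ n := Finset.ne_of_mem_erase hk
      have hkL : k ∈ Lam N := Finset.mem_of_mem_erase hk
      obtain ⟨hk0, -, -⟩ := mem_Lam_bounds (m := m) hkL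
      have hnk0 : n - k ≠ 0 := sub_ne_zero.mpr (Ne.symm hkn)
      set a := enorm2 n with hadef
      set b := enorm2 k with hbdef
      set d := enorm2 (n - k) with hddef
      set c := |((cross n k : ℤ) : ℝ)| with hcdef
      have hb0 : 0 ≤ b := enorm2_nonneg k
      have hb1 : 1 ≤ b := one_le_enorm2 hk0
      have hbpos : 0 < b := lt_of_lt_of_le one_pos hb1
      have hbN : b ≤ (N : ℝ) := enorm2_le_N hkL
      have hd1 : 1 ≤ d := one_le_enorm2 hnk0
      have hdpos : 0 < d := lt_of_lt_of_le one_pos hd1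
      have hd2N : d ≤ 2 * (N : ℝ) := enorm2_sub_le hn hkL
      have hc0 : 0 ≤ c := abs_nonneg _
      have hcab : c ≤ a * b := abs_cross_le n k
      have hsd : 0 < Real.sqrt d := Real.sqrt_pos.mpr hdpos
      have hd52 : d ^ (-(5 / 2) : ℝ) = (d ^ (2 : ℕ) * Real.sqrt d)⁻¹ := by
        rw [show (-(5 / 2) : ℝ) = -(((2 : ℕ) : ℝ) + 1 / 2) by norm_num,
          Real.rpow_neg hdpos.le, Real.rpow_add hdpos, Real.rpow_natCast,
          ← Real.sqrt_eq_rpow]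
      rw [hd52, ← div_eq_mul_inv]
      rw [div_le_div_iff₀ (by positivity) (by positivity)]
      have e1 : c ^ 6 ≤ (a * b) ^ 6 := pow_le_pow_left₀ hc0 hcab 6
      have e2 : d + b ≤ 3 * (N : ℝ) := by linarith
      have e3 : Real.sqrt d ≤ Real.sqrt (2 * (N : ℝ)) := Real.sqrt_le_sqrt hd2N
      have e4 : b ^ 2 ≤ (N : ℝ) ^ 2 := pow_le_pow_left₀ hb0 hbN 2
      calc c ^ 6 * (d + b) * (d ^ (2 : ℕ) * Real.sqrt d)
          ≤ (a * b) ^ 6 * (3 * (N : ℝ)) * (d ^ (2 : ℕ) * Real.sqrt (2 * (N : ℝ))) := by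
            apply mul_le_mul
            · exact mul_le_mul e1 e2 (by linarith) (by positivity)
            · exact mul_le_mul_of_nonneg_left e3 (by positivity)
            · positivity
            · positivity
        _ = (a ^ 6 * b ^ 4 * d ^ 2 * Real.sqrt (2 * (N : ℝ)) * (3 * (N : ℝ))) * b ^ 2 := by
            ring
        _ ≤ (a ^ 6 * b ^ 4 * d ^ 2 * Real.sqrt (2 * (N : ℝ)) * (3 * (N : ℝ))) * (N : ℝ) ^ 2 := by
            apply mul_le_mul_of_nonneg_left e4
            positivity
        _ = 3 * (N : ℝ) ^ 3 * Real.sqrt (2 * (N : ℝ)) * a ^ (6 : ℕ) * (b ^ 4 * d ^ 2) := by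
            ring
    have hB : ∑ k ∈ (Lam N).erase n, enorm2 (n - k) ^ (-(5 / 2) : ℝ) ≤ Tc (5 / 2) := by
      have hinj : ∀ x ∈ (Lam N).erase n, ∀ y ∈ (Lam N).erase n,
          n - x = n - y → x = y := fun x _ y _ h => sub_right_injective h
      calc ∑ k ∈ (Lam N).erase n, enorm2 (n - k) ^ (-(5 / 2) : ℝ)
          = ∑ p ∈ ((Lam N).erase n).image (fun k => n - k), enorm2 p ^ (-(5 / 2) : ℝ) :=
            (Finset.sum_image (f := fun p => enorm2 p ^ (-(5 / 2) : ℝ)) hinj).symm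
        _ ≤ Tc (5 / 2) := sum_enorm2_rpow_le (by norm_num) _
    calc ∑ k ∈ (Lam N).erase n,
        |((cross n k : ℤ) : ℝ)| ^ 6 * (enorm2 (n - k) + enorm2 k) /
          (enorm2 k ^ 4 * enorm2 (n - k) ^ 2)
        ≤ ∑ k ∈ (Lam N).erase n,
            (3 * (N : ℝ) ^ 3 * Real.sqrt (2 * (N : ℝ))) * enorm2 n ^ (6 : ℕ) *
              enorm2 (n - k) ^ (-(5 / 2) : ℝ) := Finset.sum_le_sum stepA
      _ = (3 * (N : ℝ) ^ 3 * Real.sqrt (2 * (N : ℝ))) * enorm2 n ^ (6 : ℕ) *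
            ∑ k ∈ (Lam N).erase n, enorm2 (n - k) ^ (-(5 / 2) : ℝ) := by
          rw [← Finset.mul_sum]
      _ ≤ (3 * (N : ℝ) ^ 3 * Real.sqrt (2 * (N : ℝ))) * enorm2 n ^ (6 : ℕ) * Tc (5 / 2) := by
          apply mul_le_mul_of_nonneg_left hB
          positivity
      _ = (3 * (N : ℝ) ^ 3 * Real.sqrt (2 * (N : ℝ)) * Tc (5 / 2)) * enorm2 n ^ (6 : ℕ) := by
          ring
  -- Step C: assemble the outer sum.
  have houter : ∑ n ∈ Lam N, enorm2 n ^ (1 - 2 * s) *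
      (∑ k ∈ (Lam N).erase n,
        |((cross n k : ℤ) : ℝ)| ^ 6 * (enorm2 (n - k) + enorm2 k) /
          (enorm2 k ^ 4 * enorm2 (n - k) ^ 2)) ≤
      (3 * (N : ℝ) ^ 3 * Real.sqrt (2 * (N : ℝ)) * Tc (5 / 2)) * Tc (2 * s - 7) := by
    have hstep : ∀ n ∈ Lam N, enorm2 n ^ (1 - 2 * s) *
        (∑ k ∈ (Lam N).erase n,
          |((cross n k : ℤ) : ℝ)| ^ 6 * (enorm2 (n - k) + enorm2 k) /
            (enorm2 k ^ 4 * enorm2 (n - k) ^ 2)) ≤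
        (3 * (N : ℝ) ^ 3 * Real.sqrt (2 * (N : ℝ)) * Tc (5 / 2)) *
          enorm2 n ^ (-(2 * s - 7)) := by
      intro n hn
      obtain ⟨hn0, -, -⟩ := mem_Lam_bounds (m := m) hn
      have hapos : 0 < enorm2 n := enorm2_pos hn0
      have hrw : enorm2 n ^ (1 - 2 * s) * enorm2 n ^ (6 : ℕ) =
          enorm2 n ^ (-(2 * s - 7)) := by
        rw [← Real.rpow_natCast (enorm2 n) 6, ← Real.rpow_add hapos]
        congr 1
        push_cast
        ring
      calc enorm2 n ^ (1 - 2 * s) *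
          (∑ k ∈ (Lam N).erase n,
            |((cross n k : ℤ) : ℝ)| ^ 6 * (enorm2 (n - k) + enorm2 k) /
              (enorm2 k ^ 4 * enorm2 (n - k) ^ 2))
          ≤ enorm2 n ^ (1 - 2 * s) *
            ((3 * (N : ℝ) ^ 3 * Real.sqrt (2 * (N : ℝ)) * Tc (5 / 2)) *
              enorm2 n ^ (6 : ℕ)) :=
            mul_le_mul_of_nonneg_left (hinner n hn) (Real.rpow_nonneg (enorm2_nonneg n) _)
        _ = (3 * (N : ℝ) ^ 3 * Real.sqrt (2 * (N : ℝ)) * Tc (5 / 2)) *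
              (enorm2 n ^ (1 - 2 * s) * enorm2 n ^ (6 : ℕ)) := by ring
        _ = (3 * (N : ℝ) ^ 3 * Real.sqrt (2 * (N : ℝ)) * Tc (5 / 2)) *
              enorm2 n ^ (-(2 * s - 7)) := by rw [hrw]
    calc ∑ n ∈ Lam N, enorm2 n ^ (1 - 2 * s) *
        (∑ k ∈ (Lam N).erase n,
          |((cross n k : ℤ) : ℝ)| ^ 6 * (enorm2 (n - k) + enorm2 k) /
            (enorm2 k ^ 4 * enorm2 (n - k) ^ 2))
        ≤ ∑ n ∈ Lam N, (3 * (N : ℝ) ^ 3 * Real.sqrt (2 * (N : ℝ)) * Tc (5 / 2)) *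
            enorm2 n ^ (-(2 * s - 7)) := Finset.sum_le_sum hstep
      _ = (3 * (N : ℝ) ^ 3 * Real.sqrt (2 * (N : ℝ)) * Tc (5 / 2)) *
            ∑ n ∈ Lam N, enorm2 n ^ (-(2 * s - 7)) := by rw [← Finset.mul_sum]
      _ ≤ (3 * (N : ℝ) ^ 3 * Real.sqrt (2 * (N : ℝ)) * Tc (5 / 2)) * Tc (2 * s - 7) := by
          apply mul_le_mul_of_nonneg_left (sum_enorm2_rpow_le (by linarith) _)
          positivity
  -- Final algebra.
  have hfinal : (1 / (N : ℝ) ^ 4) *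
      ((3 * (N : ℝ) ^ 3 * Real.sqrt (2 * (N : ℝ)) * Tc (5 / 2)) * Tc (2 * s - 7)) =
      3 * Real.sqrt 2 * Tc (5 / 2) * Tc (2 * s - 7) / Real.sqrt ((N : ℕ) : ℝ) := by
    rw [Real.sqrt_mul (by norm_num : (0 : ℝ) ≤ 2) (N : ℝ)]
    rw [eq_div_iff hsN.ne']
    have hsq : Real.sqrt (N : ℝ) * Real.sqrt (N : ℝ) = (N : ℝ) := Real.mul_self_sqrt hN0.le
    have hNne : (N : ℝ) ≠ 0 := hN0.ne'
    calc _ = 3 * Real.sqrt 2 * Tc (5 / 2) * Tc (2 * s - 7) *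
          ((Real.sqrt (N : ℝ) * Real.sqrt (N : ℝ)) * ((N : ℝ) ^ 3 * (1 / (N : ℝ) ^ 4))) := by ring
      _ = _ := by
        rw [hsq, show (N : ℝ) * ((N : ℝ) ^ 3 * (1 / (N : ℝ) ^ 4)) = 1 by field_simp, mul_one]
  calc Q s N = (1 / (N : ℝ) ^ 4) *
      ∑ n ∈ Lam N, enorm2 n ^ (1 - 2 * s) *
        ∑ k ∈ (Lam N).erase n,
          |((cross n k : ℤ) : ℝ)| ^ 6 * (enorm2 (n - k) + enorm2 k) /
            (enorm2 k ^ 4 * enorm2 (n - k) ^ 2) := rfl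
  _ ≤ (1 / (N : ℝ) ^ 4) *
      ((3 * (N : ℝ) ^ 3 * Real.sqrt (2 * (N : ℝ)) * Tc (5 / 2)) * Tc (2 * s - 7)) :=
      mul_le_mul_of_nonneg_left houter (by positivity)
  _ = 3 * Real.sqrt 2 * Tc (5 / 2) * Tc (2 * s - 7) / Real.sqrt ((N : ℕ) : ℝ) := hfinal

lemma Q_nonneg (s : ℝ) (N : ℕ) : 0 ≤ Q s N := by
  apply mul_nonneg (by positivity)
  apply Finset.sum_nonneg
  intro n _
  apply mul_nonneg (Real.rpow_nonneg (enorm2_nonneg n) _)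
  apply Finset.sum_nonneg
  intro k _
  apply div_nonneg
  · exact mul_nonneg (pow_nonneg (abs_nonneg _) _)
      (add_nonneg (enorm2_nonneg _) (enorm2_nonneg _))
  · exact mul_nonneg (pow_nonneg (enorm2_nonneg _) _) (pow_nonneg (enorm2_nonneg _) _)

/-- For every `s > 9/2`, `Q_N(s) → 0` as `N → ∞` along odd `N`. -/
theorem Q_tendsto_zero (s : ℝ) (hs : 9 / 2 < s) :
    Tendsto (fun m : ℕ => Q s (2 * m + 3)) atTop (nhds 0) := by
  have hsqrt : Tendsto Real.sqrt atTop atTop :=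
    (tendsto_rpow_atTop (show (0 : ℝ) < 1 / 2 by norm_num)).congr
      fun x => (Real.sqrt_eq_rpow x).symm
  have hcast : Tendsto (fun m : ℕ => ((2 * m + 3 : ℕ) : ℝ)) atTop atTop := by
    apply tendsto_natCast_atTop_atTop.comp
    apply tendsto_atTop_mono (fun m => by omega : ∀ m : ℕ, m ≤ 2 * m + 3) tendsto_id
  have hg : Tendsto (fun m : ℕ =>
      3 * Real.sqrt 2 * Tc (5 / 2) * Tc (2 * s - 7) / Real.sqrt ((2 * m + 3 : ℕ) : ℝ))
      atTop (nhds 0) :=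
    Tendsto.div_atTop tendsto_const_nhds (hsqrt.comp hcast)
  exact squeeze_zero (fun m => Q_nonneg s _) (fun m => Q_le s hs m) hg
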